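/- Hermiticity of the q-antisymmetrizer with respect to the metric: g^{a_k b_k}⋯g^{a_1 b_1} W^{i_k...i_1}_{b_k...b_1} = W^{a_1...a_k}_{b_1...b_k} g^{b_1 i_1}⋯g^{b_k i_k} (summation over the b's), where g^{ab}=δ_{a,b'} and W is the q-antisymmetrizer on (ℂ^N)^{⊗k}. -/

import Mathlib

/-- `Λ` acting at positions `t, t+1` of `(ℂ^N)^{⊗k}` (identity if `t+1 ≥ k`):
built from `Λ^{ab}_{cd} = q(a,b) δ^a_d δ^b_c`, it maps `e_g` to
`q(g t, g (t+1)) e_{g ∘ swap(t,t+1)}`. -/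
def lamPos {N : ℕ} (q : Fin N → Fin N → ℂ) (k t : ℕ) :
    Matrix (Fin k → Fin N) (Fin k → Fin N) ℂ :=
  if h : t + 1 < k then
    fun f g =>
      if g = f ∘ (Equiv.swap (⟨t, Nat.lt_of_succ_lt h⟩ : Fin k) ⟨t + 1, h⟩)
      then q (f ⟨t, Nat.lt_of_succ_lt h⟩) (f ⟨t + 1, h⟩) else 0
  else 1

/-- The operators `𝓘_{1...m}` of the q-antisymmetrizer recursion:
`𝓘_{1} = I`, `𝓘_{1...m} = I − 𝓘_{1...m−1} Λ_{m−1,m}`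
(in 0-based positions `Λ_{m−1,m} = lamPos q k (m−2)`), realized as matrices on
`(ℂ^N)^{⊗k}`. -/
noncomputable def Ical {N : ℕ} (q : Fin N → Fin N → ℂ) (k : ℕ) :
    ℕ → Matrix (Fin k → Fin N) (Fin k → Fin N) ℂ
  | 0 => 1
  | 1 => 1
  | (m + 2) => 1 - Ical q k (m + 1) * lamPos q k m

/-- The q-antisymmetrizer `W_{1...m}` defined by the recursion
`W_{1...m} = 𝓘_{1...m} W_{1...m−1}`, `W_1 = I`. -/
noncomputable def Wmat {N : ℕ} (q : Fin N → Fin N → ℂ) (k : ℕ) :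
    ℕ → Matrix (Fin k → Fin N) (Fin k → Fin N) ℂ
  | 0 => 1
  | (m + 1) => Ical q k (m + 1) * Wmat q k m

/-- The metric `g^{ab} = g_{ab} = δ_{a,b'}` with primed index `b' = Fin.rev b`. -/
def gMet {N : ℕ} (a b : Fin N) : ℂ := if b = Fin.rev a then 1 else 0


namespace WH

variable {N k : ℕ} {q : Fin N → Fin N → ℂ}

/-- sorted pairs of indices -/
def pairs (k : ℕ) : Finset (Fin k × Fin k) := Finset.univ.filter (fun p => p.1 < p.2)

lemma mem_pairs {p : Fin k × Fin k} : p ∈ pairs k ↔ p.1 < p.2 := by simp [pairs]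

/-- apply a permutation to a pair and sort the result -/
def sortP (u : Equiv.Perm (Fin k)) (p : Fin k × Fin k) : Fin k × Fin k :=
  if u p.1 < u p.2 then (u p.1, u p.2) else (u p.2, u p.1)

lemma sortP_mem {u : Equiv.Perm (Fin k)} {p : Fin k × Fin k} (hp : p ∈ pairs k) :
    sortP u p ∈ pairs k := by
  rw [mem_pairs] at hp ⊢
  by_cases h : u p.1 < u p.2
  · simpa [sortP, h] using h
  · simpa [sortP, h] using ((u.injective.ne hp.ne).lt_or_gt).resolve_left h

lemma sortP_sortP {u : Equiv.Perm (Fin k)} {p : Fin k × Fin k} (hp : p ∈ pairs k) :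
    sortP u⁻¹ (sortP u p) = p := by
  rw [mem_pairs] at hp
  by_cases h : u p.1 < u p.2
  · simp [sortP, h, hp, not_lt.2 hp.le]
  · simp [sortP, h, hp, not_lt.2 hp.le]

lemma prod_pairs_reindex (u : Equiv.Perm (Fin k)) (G : Fin k × Fin k → ℂ) :
    ∏ p ∈ pairs k, G (sortP u p) = ∏ p ∈ pairs k, G p := by
  refine Finset.prod_nbij' (sortP u) (sortP u⁻¹) (fun p hp => sortP_mem hp)
    (fun p hp => sortP_mem hp) (fun p hp => sortP_sortP hp) ?_ (fun p hp => rfl)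
  intro p hp
  have := sortP_sortP (u := u⁻¹) hp
  rwa [inv_inv] at this

/-- the twisting cocycle: product of `q`-factors over inversions of `σ` -/
def cFun (q : Fin N → Fin N → ℂ) (f : Fin k → Fin N) (σ : Equiv.Perm (Fin k)) : ℂ :=
  ∏ p ∈ pairs k, if σ p.2 < σ p.1 then q (f (σ p.2)) (f (σ p.1)) else 1

lemma cFun_one (f : Fin k → Fin N) : cFun q f 1 = 1 := by
  refine Finset.prod_eq_one fun p hp => ?_
  rw [mem_pairs] at hp
  simp [not_lt.2 hp.le]

lemma cFun_mul (h2 : ∀ a b, q a b * q b a = 1) (f : Fin k → Fin N)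
    (σ τ : Equiv.Perm (Fin k)) :
    cFun q f (σ * τ) = cFun q f σ * cFun q (f ∘ σ) τ := by
  have hσ : cFun q f σ = ∏ p ∈ pairs k,
      (fun p : Fin k × Fin k => if σ p.2 < σ p.1 then q (f (σ p.2)) (f (σ p.1)) else 1)
        (sortP τ p) := (prod_pairs_reindex τ _).symm
  rw [cFun, hσ, cFun, ← Finset.prod_mul_distrib]
  refine Finset.prod_congr rfl fun p hp => ?_
  rw [mem_pairs] at hp
  simp only [Equiv.Perm.mul_apply, Function.comp]
  by_cases hτ : τ p.1 < τ p.2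
  · have h1 : ¬ τ p.2 < τ p.1 := not_lt.2 hτ.le
    simp only [sortP, if_pos hτ, if_neg h1, mul_one]
    rfl
  · have hτ' : τ p.2 < τ p.1 := ((τ.injective.ne hp.ne).lt_or_gt).resolve_left hτ
    simp only [sortP, if_neg hτ, if_pos hτ']
    by_cases hs : σ (τ p.1) < σ (τ p.2)
    · have h1 : ¬ σ (τ p.2) < σ (τ p.1) := not_lt.2 hs.le
      simp only [if_neg h1, if_pos hs, h2]
      exact if_neg h1
    · have hne : σ (τ p.1) ≠ σ (τ p.2) := σ.injective.ne (τ.injective.ne hp.ne)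
      have hs' : σ (τ p.2) < σ (τ p.1) := (hne.lt_or_gt).resolve_left hs
      simp only [if_pos hs', if_neg hs, one_mul]
      exact if_pos hs'

/-- twisted permutation matrix -/
def Lmat (q : Fin N → Fin N → ℂ) (σ : Equiv.Perm (Fin k)) :
    Matrix (Fin k → Fin N) (Fin k → Fin N) ℂ :=
  fun f g => if g = f ∘ σ then cFun q f σ else 0

lemma Lmat_one : Lmat q (1 : Equiv.Perm (Fin k)) = 1 := by
  funext f g
  rw [Lmat, Matrix.one_apply]
  have : f ∘ ⇑(1 : Equiv.Perm (Fin k)) = f := rfl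
  rw [this, cFun_one]
  by_cases h : f = g
  · simp [h]
  · simp [h, Ne.symm h]

lemma Lmat_mul (h2 : ∀ a b, q a b * q b a = 1) (σ τ : Equiv.Perm (Fin k)) :
    Lmat q σ * Lmat q τ = Lmat q (σ * τ) := by
  funext f g
  rw [Matrix.mul_apply]
  rw [Finset.sum_eq_single (f ∘ ⇑σ)]
  · have hc : (f ∘ ⇑σ) ∘ ⇑τ = f ∘ ⇑(σ * τ) := by
      funext x; simp [Equiv.Perm.mul_apply, Function.comp]
    simp only [Lmat, if_pos rfl, hc]
    split_ifs
    all_goals first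
      | exact (cFun_mul h2 f σ τ).symm
      | exact mul_zero _
      | simp_all
  · intro b _ hb
    simp [Lmat, hb]
  · simp

lemma cFun_swap (f : Fin k → Fin N) {a b : Fin k} (hab : a < b) (hcons : b.val = a.val + 1) :
    cFun q f (Equiv.swap a b) = q (f a) (f b) := by
  have key : ∀ p ∈ pairs k, p ≠ (a, b) →
      Equiv.swap a b p.1 < Equiv.swap a b p.2 := by
    intro p hp hne
    rw [mem_pairs] at hp
    by_cases h1a : p.1 = a
    · have h2b : p.2 ≠ b := fun h => hne (Prod.ext h1a h)
      have h2a : p.2 ≠ a := fun h => absurd (h ▸ hp) (h1a ▸ lt_irrefl _)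
      rw [h1a, Equiv.swap_apply_left, Equiv.swap_apply_of_ne_of_ne h2a h2b]
      rw [Fin.lt_def] at hp ⊢
      rw [h1a] at hp
      have := fun h => h2b (Fin.ext h)
      omega
    · by_cases h1b : p.1 = b
      · have h2a : p.2 ≠ a := fun h => absurd (h ▸ hp) (by rw [h1b]; exact not_lt.2 hab.le)
        have h2b : p.2 ≠ b := fun h => absurd (h ▸ hp) (h1b ▸ lt_irrefl _)
        rw [h1b, Equiv.swap_apply_right, Equiv.swap_apply_of_ne_of_ne h2a h2b]
        rw [Fin.lt_def] at hp hab ⊢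
        rw [h1b] at hp
        omega
      · rw [Equiv.swap_apply_of_ne_of_ne h1a h1b]
        by_cases h2a : p.2 = a
        · rw [h2a, Equiv.swap_apply_left]
          exact lt_trans (h2a ▸ hp) hab
        · by_cases h2b : p.2 = b
          · rw [h2b, Equiv.swap_apply_right]
            rw [Fin.lt_def] at hp ⊢
            rw [h2b] at hp
            have := fun h => h1a (Fin.ext h)
            omega
          · rw [Equiv.swap_apply_of_ne_of_ne h2a h2b]
            exact hp
  rw [cFun, Finset.prod_eq_single (a, b)]
  · rw [Equiv.swap_apply_left, Equiv.swap_apply_right, if_pos hab]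
  · intro p hp hne
    exact if_neg (not_lt.2 (key p hp hne).le)
  · exact fun h => absurd (mem_pairs.2 hab) h

lemma lamPos_eq {t : ℕ} (hk : t + 1 < k) :
    lamPos q k t = Lmat q (Equiv.swap (⟨t, Nat.lt_of_succ_lt hk⟩ : Fin k) ⟨t + 1, hk⟩) := by
  unfold lamPos
  funext f g
  rw [Lmat, cFun_swap f (a := ⟨t, Nat.lt_of_succ_lt hk⟩) (b := ⟨t+1, hk⟩)
    (Fin.mk_lt_mk.2 (Nat.lt_succ_self t)) rfl]
  exact congrArg (fun M : Matrix (Fin k → Fin N) (Fin k → Fin N) ℂ => M f g) (dif_pos hk)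

/-- adjacent transposition as a permutation (identity out of range) -/
def adjSwap (k t : ℕ) : Equiv.Perm (Fin k) :=
  if h : t + 1 < k then Equiv.swap ⟨t, Nat.lt_of_succ_lt h⟩ ⟨t + 1, h⟩ else 1

lemma lamPos_eq_adj {t : ℕ} (hk : t + 1 < k) : lamPos q k t = Lmat q (adjSwap k t) := by
  rw [adjSwap, dif_pos hk, lamPos_eq hk]

/-- `cyc k j m = s_j s_{j+1} ⋯ s_{m-1}` -/
def cyc (k j m : ℕ) : Equiv.Perm (Fin k) := ((List.range' j (m - j)).map (adjSwap k)).prod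

lemma cyc_self (j : ℕ) : cyc k j j = 1 := by simp [cyc]

lemma cyc_succ {j m : ℕ} (h : j ≤ m) : cyc k j (m + 1) = cyc k j m * adjSwap k m := by
  rw [cyc, cyc, show m + 1 - j = (m - j) + 1 by omega, List.range'_concat,
    List.map_append, List.prod_append]
  have h1 : j + 1 * (m - j) = m := by omega
  simp only [h1, List.map_cons, List.map_nil, List.prod_cons, List.prod_nil, mul_one]

lemma adjSwap_apply_of_gt {t : ℕ} {i : Fin k} (hi : t + 1 < i.val) : adjSwap k t i = i := by
  have h : t + 1 < k := lt_trans hi i.isLt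
  rw [adjSwap, dif_pos h]
  refine Equiv.swap_apply_of_ne_of_ne (fun he => ?_) (fun he => ?_)
  · have hv : (⟨t, Nat.lt_of_succ_lt h⟩ : Fin k).val = t := rfl
    rw [he, hv] at hi; omega
  · have hv : (⟨t + 1, h⟩ : Fin k).val = t + 1 := rfl
    rw [he, hv] at hi; omega

lemma cyc_apply_of_gt : ∀ {j m : ℕ}, j ≤ m → ∀ {i : Fin k}, m < i.val → cyc k j m i = i := by
  intro j m
  induction m with
  | zero => intro hj i hi; interval_cases j; rw [cyc_self]; rfl
  | succ m ih =>
    intro hj i hi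
    rcases Nat.eq_or_lt_of_le hj with h | h
    · rw [← h, cyc_self]; rfl
    · have hj' : j ≤ m := by omega
      rw [cyc_succ hj', Equiv.Perm.mul_apply, adjSwap_apply_of_gt hi]
      exact ih hj' (by omega)

lemma adjSwap_apply_succ {t : ℕ} (h : t + 1 < k) :
    adjSwap k t ⟨t + 1, h⟩ = ⟨t, Nat.lt_of_succ_lt h⟩ := by
  rw [adjSwap, dif_pos h, Equiv.swap_apply_right]

lemma cyc_apply_last : ∀ {j m : ℕ} (hj : j ≤ m) (hm : m < k),
    cyc k j m ⟨m, hm⟩ = ⟨j, lt_of_le_of_lt hj hm⟩ := by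
  intro j m
  induction m with
  | zero => intro hj hm; interval_cases j; rw [cyc_self]; rfl
  | succ m ih =>
    intro hj hm
    rcases Nat.eq_or_lt_of_le hj with h | h
    · subst h; rw [cyc_self]; rfl
    · have hj' : j ≤ m := by omega
      rw [cyc_succ hj', Equiv.Perm.mul_apply, adjSwap_apply_succ hm, ih hj' (by omega)]

lemma cyc_sign : ∀ {j m : ℕ}, j ≤ m → m < k →
    Equiv.Perm.sign (cyc k j m) = (-1) ^ (m - j) := by
  intro j m
  induction m with
  | zero => intro hj _; interval_cases j; rw [cyc_self]; simp
  | succ m ih =>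
    intro hj hm
    rcases Nat.eq_or_lt_of_le hj with h | h
    · subst h; rw [cyc_self]; simp
    · have hj' : j ≤ m := by omega
      rw [cyc_succ hj', Equiv.Perm.sign_mul, ih hj' (by omega), adjSwap, dif_pos hm,
        Equiv.Perm.sign_swap (by simp), show m + 1 - j = (m - j) + 1 by omega, pow_succ]


variable {N k : ℕ} {q : Fin N → Fin N → ℂ}

/-- permutations supported on positions `< m` -/
def permsB (k m : ℕ) : Finset (Equiv.Perm (Fin k)) :=
  Finset.univ.filter (fun σ => ∀ i : Fin k, m ≤ i.val → σ i = i)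

lemma mem_permsB {m : ℕ} {σ : Equiv.Perm (Fin k)} :
    σ ∈ permsB k m ↔ ∀ i : Fin k, m ≤ i.val → σ i = i := by simp [permsB]

noncomputable def sgnC (σ : Equiv.Perm (Fin k)) : ℂ := ((Equiv.Perm.sign σ : ℤ) : ℂ)

noncomputable def Asum (q : Fin N → Fin N → ℂ) (k m : ℕ) :
    Matrix (Fin k → Fin N) (Fin k → Fin N) ℂ :=
  ∑ σ ∈ permsB k m, sgnC σ • Lmat q σ

lemma permsB_zero : permsB k 0 = {1} := by
  ext σ
  rw [mem_permsB, Finset.mem_singleton]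
  constructor
  · intro h; exact Equiv.ext fun i => h i (Nat.zero_le _)
  · intro h; subst h; intro i _; rfl

lemma Asum_zero : Asum q k 0 = 1 := by
  rw [Asum, permsB_zero, Finset.sum_singleton, Lmat_one, sgnC]
  simp

lemma Ical_sum (h2 : ∀ a b, q a b * q b a = 1) :
    ∀ m : ℕ, m < k → Ical q k (m + 1)
      = ∑ j ∈ Finset.range (m + 1), ((-1 : ℂ)) ^ (m - j) • Lmat q (cyc k j m) := by
  intro m
  induction m with
  | zero =>
    intro _
    rw [Finset.sum_range_one, cyc_self, Lmat_one, Ical]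
    simp
  | succ m ih =>
    intro hm
    have hm' : m < k := by omega
    rw [Ical, ih hm', lamPos_eq_adj hm, Finset.sum_mul, Finset.sum_range_succ (n := m + 1),
      cyc_self, Lmat_one]
    have hterm : ∀ j ∈ Finset.range (m + 1),
        ((-1 : ℂ)) ^ (m - j) • Lmat q (cyc k j m) * Lmat q (adjSwap k m)
          = -(((-1 : ℂ)) ^ (m + 1 - j) • Lmat q (cyc k j (m + 1))) := by
      intro j hj
      rw [Finset.mem_range] at hj
      have hjm : j ≤ m := by omega
      rw [smul_mul_assoc, Lmat_mul h2, ← cyc_succ hjm,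
        show m + 1 - j = (m - j) + 1 by omega, pow_succ, mul_neg_one, neg_smul, neg_neg]
    rw [Finset.sum_congr rfl hterm, Finset.sum_neg_distrib, sub_neg_eq_add]
    simp only [Nat.sub_self, pow_zero, one_smul]
    abel
lemma Asum_step (h2 : ∀ a b, q a b * q b a = 1) {m : ℕ} (hm : m < k) :
    (∑ j ∈ Finset.range (m + 1), ((-1 : ℂ)) ^ (m - j) • Lmat q (cyc k j m)) * Asum q k m
      = Asum q k (m + 1) := by
  rw [Asum, Asum, Finset.sum_mul]
  have step1 : ∀ j ∈ Finset.range (m + 1),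
      ((-1 : ℂ)) ^ (m - j) • Lmat q (cyc k j m) * ∑ τ ∈ permsB k m, sgnC τ • Lmat q τ
        = ∑ τ ∈ permsB k m, sgnC (cyc k j m * τ) • Lmat q (cyc k j m * τ) := by
    intro j hj
    rw [Finset.mem_range] at hj
    have hjm : j ≤ m := by omega
    rw [Finset.mul_sum]
    refine Finset.sum_congr rfl fun τ hτ => ?_
    rw [smul_mul_assoc, mul_smul_comm, smul_smul, Lmat_mul h2]
    congr 1
    rw [sgnC, sgnC, Equiv.Perm.sign_mul, cyc_sign hjm hm]
    push_cast [Units.val_mul]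
    ring
  rw [Finset.sum_congr rfl step1, ← Finset.sum_product']
  refine Finset.sum_nbij' (fun p => cyc k p.1 m * p.2)
    (fun σ => ((σ ⟨m, hm⟩).val, (cyc k (σ ⟨m, hm⟩).val m)⁻¹ * σ)) ?_ ?_ ?_ ?_ ?_
  · intro p hp
    rw [Finset.mem_product, Finset.mem_range] at hp
    obtain ⟨hj, hτ⟩ := hp
    rw [mem_permsB]
    intro i hi
    rw [Equiv.Perm.mul_apply, mem_permsB.1 hτ i (by omega),
      cyc_apply_of_gt (show p.1 ≤ m by omega) (show m < i.val by omega)]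
  · intro σ hσ
    rw [mem_permsB] at hσ
    have hlt : (σ ⟨m, hm⟩).val ≤ m := by
      by_contra hc
      push_neg at hc
      have ha := hσ (σ ⟨m, hm⟩) (by omega)
      have hb := congrArg Fin.val (σ.injective ha)
      have hv : (⟨m, hm⟩ : Fin k).val = m := rfl
      rw [hv] at hb
      omega
    rw [Finset.mem_product, Finset.mem_range]
    refine ⟨by omega, ?_⟩
    rw [mem_permsB]
    intro i hi
    rcases Nat.eq_or_lt_of_le hi with h | h
    · have hieq : i = ⟨m, hm⟩ := Fin.ext h.symm
      rw [hieq, Equiv.Perm.mul_apply]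
      have hc : cyc k (σ ⟨m, hm⟩).val m ⟨m, hm⟩
          = ⟨(σ ⟨m, hm⟩).val, (σ ⟨m, hm⟩).isLt⟩ := cyc_apply_last hlt hm
      rw [Equiv.Perm.inv_eq_iff_eq, hc]
    · rw [Equiv.Perm.mul_apply, hσ i (by omega), Equiv.Perm.inv_eq_iff_eq]
      exact (cyc_apply_of_gt hlt h).symm
  · intro p hp
    rw [Finset.mem_product, Finset.mem_range] at hp
    obtain ⟨hj, hτ⟩ := hp
    have hfix : p.2 ⟨m, hm⟩ = ⟨m, hm⟩ := mem_permsB.1 hτ _ le_rfl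
    have hval : ((cyc k p.1 m * p.2) ⟨m, hm⟩).val = p.1 := by
      rw [Equiv.Perm.mul_apply, hfix, cyc_apply_last (show p.1 ≤ m by omega) hm]
    refine Prod.ext hval ?_
    show (cyc k ((cyc k p.1 m * p.2) ⟨m, hm⟩).val m)⁻¹ * (cyc k p.1 m * p.2) = p.2
    rw [hval, inv_mul_cancel_left]
  · exact fun σ _ => mul_inv_cancel_left _ _
  · exact fun p _ => rfl

lemma Wmat_eq_Asum (h2 : ∀ a b, q a b * q b a = 1) :
    ∀ m : ℕ, m ≤ k → Wmat q k m = Asum q k m := by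
  intro m
  induction m with
  | zero => intro _; rw [Wmat, Asum_zero]
  | succ m ih =>
    intro hm
    rw [Wmat, Ical_sum h2 m (by omega), ih (by omega), Asum_step h2 (by omega)]
def TT (f : Fin k → Fin N) : Fin k → Fin N := fun t => Fin.rev (f (Fin.rev t))

lemma TT_TT (f : Fin k → Fin N) : TT (TT f) = f := by
  funext t; simp [TT, Fin.rev_rev]

lemma TT_inj : Function.Injective (TT (N := N) (k := k)) := fun f g h => by
  rw [← TT_TT f, h, TT_TT]

def Theta (M : Matrix (Fin k → Fin N) (Fin k → Fin N) ℂ) :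
    Matrix (Fin k → Fin N) (Fin k → Fin N) ℂ :=
  fun f g => M (TT g) (TT f)

lemma Theta_sum {α : Type*} (s : Finset α) (M : α → Matrix (Fin k → Fin N) (Fin k → Fin N) ℂ) :
    Theta (∑ c ∈ s, M c) = ∑ c ∈ s, Theta (M c) := by
  funext f g
  show (∑ c ∈ s, M c) (TT g) (TT f) = (∑ c ∈ s, Theta (M c)) f g
  rw [Matrix.sum_apply, Matrix.sum_apply]
  rfl

lemma Theta_smul (c : ℂ) (M : Matrix (Fin k → Fin N) (Fin k → Fin N) ℂ) :
    Theta (c • M) = c • Theta M := rfl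

lemma Theta_Lmat (h4 : ∀ a b, q a b = q (Fin.rev a) (Fin.rev b)) (σ : Equiv.Perm (Fin k)) :
    Theta (Lmat q σ) = Lmat q (Fin.revPerm * σ⁻¹ * Fin.revPerm) := by
  set ρ : Equiv.Perm (Fin k) := Fin.revPerm * σ⁻¹ * Fin.revPerm with hρdef
  have hρ : ∀ x, ρ x = Fin.rev (σ⁻¹ (Fin.rev x)) := by
    intro x; simp [hρdef, Equiv.Perm.mul_apply]
  funext f g
  show Lmat q σ (TT g) (TT f) = Lmat q ρ f g
  rw [Lmat, Lmat]
  have hcond : (TT f = TT g ∘ ⇑σ) ↔ (g = f ∘ ⇑ρ) := by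
    constructor
    · intro h
      funext x
      have h1 := congrFun h (σ⁻¹ (Fin.rev x))
      simp only [TT, Function.comp_apply, Equiv.Perm.coe_inv, Equiv.apply_symm_apply, Fin.rev_rev] at h1
      have h2 := Fin.rev_inj.2 h1
      rw [Fin.rev_rev, Fin.rev_rev] at h2
      simp only [Function.comp_apply, hρ]
      exact h2.symm
    · intro h
      funext y
      have h1 := congrFun h (Fin.rev (σ y))
      simp only [Function.comp_apply, hρ, Fin.rev_rev, Equiv.Perm.coe_inv, Equiv.symm_apply_apply] at h1
      show Fin.rev (f (Fin.rev y)) = Fin.rev (g (Fin.rev (σ y)))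
      rw [h1]
  by_cases h : g = f ∘ ⇑ρ
  · rw [if_pos (hcond.2 h), if_pos h]
    have hfg : ∀ x, TT g (σ x) = Fin.rev (f (Fin.rev x)) := by
      intro x
      have h1 : g (Fin.rev (σ x)) = f (Fin.rev x) := by
        rw [h]; simp only [Function.comp_apply, hρ, Fin.rev_rev, Equiv.Perm.coe_inv, Equiv.symm_apply_apply]
      simp only [TT, h1]
    set u : Equiv.Perm (Fin k) := Fin.revPerm * σ with hudef
    have hu : ∀ x, u x = Fin.rev (σ x) := by intro x; simp [hudef, Equiv.Perm.mul_apply]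
    have hρu : ∀ x, ρ (u x) = Fin.rev x := by
      intro x; rw [hu, hρ, Fin.rev_rev, Equiv.Perm.coe_inv, Equiv.symm_apply_apply]
    have hre : cFun q f ρ = ∏ p ∈ pairs k,
        (fun p : Fin k × Fin k => if ρ p.2 < ρ p.1 then q (f (ρ p.2)) (f (ρ p.1)) else 1)
          (sortP u p) := (prod_pairs_reindex u _).symm
    rw [cFun, hre]
    refine Finset.prod_congr rfl fun p hp => ?_
    rw [mem_pairs] at hp
    by_cases hs : σ p.2 < σ p.1
    · have h1 : u p.1 < u p.2 := by rw [hu, hu, Fin.rev_lt_rev]; exact hs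
      have h2 : Fin.rev p.2 < Fin.rev p.1 := Fin.rev_lt_rev.2 hp
      simp only [sortP, if_pos h1, if_pos hs, hρu, if_pos h2, hfg]
      rw [← h4]
    · have hs' : σ p.1 < σ p.2 := ((σ.injective.ne hp.ne).lt_or_gt).resolve_right hs
      have h1 : ¬ u p.1 < u p.2 := by rw [hu, hu, Fin.rev_lt_rev]; exact hs
      have h2 : ¬ Fin.rev p.1 < Fin.rev p.2 := by rw [Fin.rev_lt_rev]; exact not_lt.2 hp.le
      simp only [sortP, if_neg h1, if_neg hs, hρu, if_neg h2]
  · rw [if_neg (fun hc => h (hcond.1 hc)), if_neg h]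

lemma permsB_top : permsB k k = Finset.univ := by
  ext σ
  simp only [mem_permsB, Finset.mem_univ, iff_true]
  intro i hi
  exact absurd i.isLt (not_lt.2 hi)

lemma sgnC_conj (σ : Equiv.Perm (Fin k)) :
    sgnC (Fin.revPerm * σ⁻¹ * Fin.revPerm) = sgnC σ := by
  rw [sgnC, sgnC, Equiv.Perm.sign_mul, Equiv.Perm.sign_mul, Equiv.Perm.sign_inv]
  rcases Int.units_eq_one_or (Equiv.Perm.sign (Fin.revPerm : Equiv.Perm (Fin k))) with h | h <;>
    simp [h]

lemma Theta_Asum (h4 : ∀ a b, q a b = q (Fin.rev a) (Fin.rev b)) :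
    Theta (Asum q k k) = Asum q k k := by
  rw [Asum, Theta_sum]
  have h1 : ∀ σ ∈ permsB k k, Theta (sgnC σ • Lmat q σ)
      = sgnC σ • Lmat q (Fin.revPerm * σ⁻¹ * Fin.revPerm) := fun σ _ => by
    rw [Theta_smul, Theta_Lmat h4]
  rw [Finset.sum_congr rfl h1]
  refine Finset.sum_nbij' (fun σ => Fin.revPerm * σ⁻¹ * Fin.revPerm)
    (fun σ => Fin.revPerm * σ⁻¹ * Fin.revPerm) ?_ ?_ ?_ ?_ ?_
  · intro σ _; simp [permsB_top]
  · intro σ _; simp [permsB_top]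
  · intro σ _; group
  · intro σ _; group
  · intro σ _; rw [← sgnC_conj σ]
end WH

/-- hermiticity of the q-antisymmetrizer with respect to the
metric: `g^{a_k b_k}⋯g^{a_1 b_1} W^{i_k...i_1}_{b_k...b_1}
 = W^{a_1...a_k}_{b_1...b_k} g^{b_1 i_1}⋯g^{b_k i_k}` (summation over the
`b`'s; reversed index order is realized by precomposition with `Fin.rev`). -/
theorem Wmat_hermitian {N : ℕ} (q : Fin N → Fin N → ℂ)
    (h1 : ∀ a, q a a = 1)
    (h2 : ∀ a b, q a b * q b a = 1)
    (h3 : ∀ a b, q a b * q a (Fin.rev b) = 1)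
    (h4 : ∀ a b, q a b = q (Fin.rev a) (Fin.rev b)) :
    ∀ (k : ℕ) (a i : Fin k → Fin N),
      ∑ b : Fin k → Fin N,
        (∏ t, gMet (a t) (b t)) *
          Wmat q k k (fun t => i (Fin.rev t)) (fun t => b (Fin.rev t))
      = ∑ b : Fin k → Fin N,
          Wmat q k k a b * ∏ t, gMet (b t) (i t) := by
  intro k a i
  have hW : ∀ f g : Fin k → Fin N, Wmat q k k (WH.TT g) (WH.TT f) = Wmat q k k f g := by
    intro f g
    have h : WH.Theta (Wmat q k k) = Wmat q k k := by
      rw [WH.Wmat_eq_Asum h2 k le_rfl, WH.Theta_Asum h4]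
    exact congrFun (congrFun h f) g
  have hL : ∑ b : Fin k → Fin N, (∏ t, gMet (a t) (b t)) *
      Wmat q k k (fun t => i (Fin.rev t)) (fun t => b (Fin.rev t))
      = Wmat q k k (fun t => i (Fin.rev t)) (WH.TT a) := by
    rw [Finset.sum_eq_single (fun t => Fin.rev (a t))]
    · have h1 : (∏ t, gMet (a t) (Fin.rev (a t))) = 1 := by
        refine Finset.prod_eq_one fun t _ => ?_
        simp [gMet]
      rw [h1, one_mul]
      rfl
    · intro b _ hb
      have hex : ∃ t, b t ≠ Fin.rev (a t) := by
        by_contra hc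
        push_neg at hc
        exact hb (funext hc)
      obtain ⟨t, ht⟩ := hex
      rw [Finset.prod_eq_zero (Finset.mem_univ t) (by simp [gMet, ht]), zero_mul]
    · intro hmem
      exact absurd (Finset.mem_univ _) hmem
  have hR : ∑ b : Fin k → Fin N, Wmat q k k a b * ∏ t, gMet (b t) (i t)
      = Wmat q k k a (fun t => Fin.rev (i t)) := by
    rw [Finset.sum_eq_single (fun t => Fin.rev (i t))]
    · have h1 : (∏ t, gMet (Fin.rev (i t)) (i t)) = 1 := by
        refine Finset.prod_eq_one fun t _ => ?_
        simp [gMet, Fin.rev_rev]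
      rw [h1, mul_one]
    · intro b _ hb
      have hex : ∃ t, b t ≠ Fin.rev (i t) := by
        by_contra hc
        push_neg at hc
        exact hb (funext hc)
      obtain ⟨t, ht⟩ := hex
      have hz : gMet (b t) (i t) = 0 := by
        rw [gMet, if_neg]
        intro hc
        exact ht (by rw [hc, Fin.rev_rev])
      rw [Finset.prod_eq_zero (Finset.mem_univ t) hz, mul_zero]
    · intro hmem
      exact absurd (Finset.mem_univ _) hmem
  rw [hL, hR]
  have hgoal : (fun t => i (Fin.rev t)) = WH.TT (fun t => Fin.rev (i t)) := by
    funext t; simp [WH.TT, Fin.rev_rev]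
  rw [hgoal]
  exact hW a (fun t => Fin.rev (i t))
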